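/- In the Foata normal form F₁F₂⋯F_k of a trace, k is the minimal number of parallel steps needed to execute all tasks: k equals the length of the longest chain in the dependency order, i.e., the longest sequence of occurrences each pair of consecutive ones being dependent and ordered in the word. -/

import Mathlib

theorem stmt_19 {α : Type*} [Fintype α] (D : α → α → Prop) [DecidableRel D]
    (hrefl : ∀ a, D a a) (hsymm : Symmetric D)
    (w : List α) (depth : Fin w.length → ℕ)
    (hdepth : ∀ j : Fin w.length,
      depth j =
        (Finset.univ.filter (fun i : Fin w.length => i < j ∧ D (w.get i) (w.get j))).sup
          (fun i => depth i + 1)) :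
    -- the number `k` of Foata classes, i.e. `univ.sup (depth · + 1)`, is exactly the
    -- length of the longest chain of pairwise-consecutively dependent occurrences
    (∃ p : List (Fin w.length),
        p.Chain' (fun i j => i < j ∧ D (w.get i) (w.get j)) ∧
          p.length = Finset.univ.sup (fun j : Fin w.length => depth j + 1)) ∧
      ∀ p : List (Fin w.length),
        p.Chain' (fun i j => i < j ∧ D (w.get i) (w.get j)) →
          p.length ≤ Finset.univ.sup (fun j : Fin w.length => depth j + 1) := by
  set R : Fin w.length → Fin w.length → Prop :=
    fun i j => i < j ∧ D (w.get i) (w.get j) with hR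
  have mono : ∀ i j, R i j → depth i + 1 ≤ depth j := by
    intro i j hij
    rw [hdepth j]
    have hmem : i ∈ Finset.univ.filter
        (fun i' : Fin w.length => i' < j ∧ D (w.get i') (w.get j)) :=
      Finset.mem_filter.mpr ⟨Finset.mem_univ i, hij.1, hij.2⟩
    exact Finset.le_sup (f := fun i => depth i + 1) hmem
  have aux : ∀ (p : List (Fin w.length)) a, List.Chain R a p →
      ∃ b, depth a + p.length ≤ depth b := by
    intro p
    induction p with
    | nil => intro a _; exact ⟨a, by simp⟩
    | cons c q ih =>
      intro a h
      rcases List.chain_cons.mp h with ⟨hac, hcq⟩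
      obtain ⟨b, hb⟩ := ih c hcq
      have := mono a c hac
      exact ⟨b, by simp only [List.length_cons]; omega⟩
  have ex : ∀ n, ∀ j : Fin w.length, j.val = n →
      ∃ p : List (Fin w.length), p.Chain' R ∧ p.getLast? = some j ∧
        p.length = depth j + 1 := by
    intro n
    induction n using Nat.strong_induction_on with
    | _ n ih =>
      intro j hj
      by_cases hne : (Finset.univ.filter
          (fun i : Fin w.length => i < j ∧ D (w.get i) (w.get j))).Nonempty
      · obtain ⟨i, hi, hsup⟩ := Finset.exists_mem_eq_sup _ hne (fun i => depth i + 1)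
        simp only [Finset.mem_filter] at hi
        obtain ⟨p, hc, hl, hlen⟩ := ih i.val (by rw [← hj]; exact hi.2.1) i rfl
        refine ⟨p ++ [j], ?_, ?_, ?_⟩
        · show List.IsChain R (p ++ [j]); rw [List.isChain_append]
          refine ⟨hc, List.isChain_singleton j, ?_⟩
          intro x hx y hy
          rw [hl] at hx
          simp only [Option.mem_def, Option.some.injEq, List.head?_cons] at hx hy
          subst hx; subst hy
          exact ⟨hi.2.1, hi.2.2⟩
        · simp
        · rw [List.length_append, hlen, hdepth j, ← hsup]; simp
      · have hz : depth j = 0 := by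
          rw [hdepth j, Finset.not_nonempty_iff_eq_empty.mp hne, Finset.sup_empty]; rfl
        exact ⟨[j], List.isChain_singleton j, rfl, by simp [hz]⟩
  constructor
  · rcases isEmpty_or_nonempty (Fin w.length) with hE | hNE
    · refine ⟨[], List.isChain_nil, ?_⟩
      simp [Finset.univ_eq_empty]
    · obtain ⟨j, _, hsup⟩ := Finset.exists_mem_eq_sup Finset.univ Finset.univ_nonempty
        (fun j : Fin w.length => depth j + 1)
      obtain ⟨p, hc, _, hlen⟩ := ex j.val j rfl
      exact ⟨p, hc, by rw [hlen, hsup]⟩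
  · intro p hp
    match p, hp with
    | [], _ => simp
    | a :: q, hp =>
      obtain ⟨b, hb⟩ := aux q a hp
      calc (a :: q).length = q.length + 1 := by simp
        _ ≤ depth b + 1 := by omega
        _ ≤ Finset.univ.sup (fun j : Fin w.length => depth j + 1) :=
            Finset.le_sup (f := fun j : Fin w.length => depth j + 1) (Finset.mem_univ b)
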